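/- Consider the discrete-time system x⁺ = F(d,x) on a closed set S ⊆ ℝⁿ with equilibrium x*. Suppose A ⊆ S is a trapping region with transient bound m, there exist V_i : S → ℝ≥0 (i = 1,…,l), a nonnegative matrix Γ with ρ(Γ) < 1 and functions a₁, a₂ ∈ K_∞ with a₁ ≤ a₂ such that a₁(|x−x*|) ≤ max_i V_i(x) ≤ a₂(|x−x*|) and V_i(F(d,x)) ≤ Σ_j γ_{i,j} V_j(x) for all x ∈ A, d ∈ D. Assume additionally F is locally bounded and continuous on D×{x*}. Then x* is robustly globally asymptotically stable: there exists σ ∈ KL such that every solution satisfies |x(t)−x*| ≤ σ(|x(0)−x*|, t) for all t ∈ ℕ. -/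

import Mathlib

open Filter intervalIntegral MeasureTheory
open scoped ENNReal NNReal

/-- A class `K_∞` function: continuous, strictly increasing, zero at zero, unbounded. -/
def IsKInfFun (a : ℝ → ℝ) : Prop :=
  ContinuousOn a (Set.Ici 0) ∧ StrictMonoOn a (Set.Ici 0) ∧ a 0 = 0 ∧
    Filter.Tendsto a Filter.atTop Filter.atTop

/-- A class `KL` function. -/
def IsKLFun (σ : ℝ → ℝ → ℝ) : Prop :=
  (∀ t, 0 ≤ t → ContinuousOn (fun s => σ s t) (Set.Ici 0) ∧
      StrictMonoOn (fun s => σ s t) (Set.Ici 0) ∧ σ 0 t = 0 ∧ ∀ s, 0 ≤ s → 0 ≤ σ s t) ∧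
  (∀ s, 0 ≤ s → AntitoneOn (fun t => σ s t) (Set.Ici 0) ∧
      Filter.Tendsto (fun t => σ s t) Filter.atTop (nhds 0))

lemma aux_matrix_pow_entry_bound {k : ℕ} (M : Matrix (Fin k) (Fin k) ℂ)
    (h : ∀ μ : ℂ, M.charpoly.IsRoot μ → ‖μ‖ < 1) :
    ∃ c lam : ℝ, 0 ≤ c ∧ 0 < lam ∧ lam < 1 ∧
      ∀ p i j, ‖(M ^ p) i j‖ ≤ c * lam ^ p := by
  rcases isEmpty_or_nonempty (Fin k) with hk | hk
  · exact ⟨1, 1/2, zero_le_one, by norm_num, by norm_num, fun p i j => isEmptyElim i⟩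
  letI : NormedRing (Matrix (Fin k) (Fin k) ℂ) := Matrix.linftyOpNormedRing
  letI : NormedAlgebra ℂ (Matrix (Fin k) (Fin k) ℂ) := Matrix.linftyOpNormedAlgebra
  haveI : CompleteSpace (Matrix (Fin k) (Fin k) ℂ) := FiniteDimensional.complete ℂ _
  have hspec : ∀ μ ∈ spectrum ℂ M, ‖μ‖ < 1 := by
    intro μ hμ
    apply h
    have h1 : ¬ IsUnit (algebraMap ℂ (Matrix (Fin k) (Fin k) ℂ) μ - M) :=
      spectrum.mem_iff.mp hμ
    have h2 : (algebraMap ℂ (Matrix (Fin k) (Fin k) ℂ) μ - M).det = 0 := by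
      by_contra hdet
      exact h1 ((Matrix.isUnit_iff_isUnit_det _).mpr (isUnit_iff_ne_zero.mpr hdet))
    have h3 : (Matrix.charpoly M).eval μ =
        (algebraMap ℂ (Matrix (Fin k) (Fin k) ℂ) μ - M).det := by
      rw [Matrix.charpoly, ← Polynomial.coe_evalRingHom, RingHom.map_det]
      congr 1
      ext i j
      by_cases hij : i = j <;>
        simp [hij, Matrix.charmatrix_apply, Matrix.map_apply, Matrix.algebraMap_matrix_apply,
          Matrix.diagonal_apply, Matrix.sub_apply]
    exact (Polynomial.IsRoot.def).mpr (h3.trans h2)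
  have hρ : spectralRadius ℂ M < 1 := by
    have := spectrum.spectralRadius_lt_of_forall_lt (a := M) (r := 1)
      (fun z hz => by
        have := hspec z hz
        rw [← NNReal.coe_lt_coe]
        simpa using this)
    simpa using this
  obtain ⟨r, hr1, hr2⟩ := ENNReal.lt_iff_exists_nnreal_btwn.mp hρ
  have hrpos : 0 < r := by
    rcases eq_or_lt_of_le (show (0:ℝ≥0) ≤ r from zero_le) with h0 | h0
    · exfalso
      rw [← h0] at hr1
      simp at hr1
    · exact h0
  have hrlt : (r : ℝ) < 1 := by exact_mod_cast hr2
  have hrposR : (0:ℝ) < r := hrpos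
  have hgel := spectrum.pow_nnnorm_pow_one_div_tendsto_nhds_spectralRadius M
  have hev : ∀ᶠ p : ℕ in atTop, (‖M ^ p‖₊ : ℝ≥0∞) ^ (1 / (p:ℝ)) < (r : ℝ≥0∞) :=
    hgel.eventually_lt_const hr1
  obtain ⟨N, hN⟩ := (hev.and (eventually_ge_atTop 1)).exists_forall_of_atTop
  have hbig : ∀ p, N ≤ p → ‖M ^ p‖ ≤ (r:ℝ) ^ p := by
    intro p hp
    obtain ⟨hlt, hp1⟩ := hN p hp
    have hp0 : (p:ℝ) ≠ 0 := by
      have : (0:ℝ) < p := by exact_mod_cast hp1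
      linarith
    have h1 : ((‖M ^ p‖₊ : ℝ≥0∞) ^ (1 / (p:ℝ))) ^ (p:ℝ) ≤ ((r : ℝ≥0∞)) ^ (p:ℝ) :=
      ENNReal.rpow_le_rpow hlt.le (by positivity)
    rw [← ENNReal.rpow_mul, one_div, inv_mul_cancel₀ hp0, ENNReal.rpow_one] at h1
    have h2 : ((r : ℝ≥0∞)) ^ (p:ℝ) = ((r ^ p : ℝ≥0) : ℝ≥0∞) := by
      rw [← NNReal.rpow_natCast r p, ← ENNReal.coe_rpow_of_nonneg _ (Nat.cast_nonneg p)]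
    rw [h2, ENNReal.coe_le_coe] at h1
    have h3 : ‖M ^ p‖ ≤ ((r ^ p : ℝ≥0) : ℝ) := h1
    simpa using h3
  refine ⟨1 + ∑ q ∈ Finset.range N, ‖M ^ q‖ / (r:ℝ) ^ q, r, by positivity, hrposR, hrlt, ?_⟩
  intro p i j
  have hentry : ‖(M ^ p) i j‖ ≤ ‖M ^ p‖ := by
    have h4 : ‖(M ^ p) i j‖₊ ≤ ‖M ^ p‖₊ := by
      rw [Matrix.linfty_opNNNorm_def]
      calc ‖(M ^ p) i j‖₊ ≤ ∑ j', ‖(M ^ p) i j'‖₊ :=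
          Finset.single_le_sum (f := fun j' => ‖(M ^ p) i j'‖₊) (fun j' _ => zero_le)
            (Finset.mem_univ j)
        _ ≤ _ := Finset.le_sup (f := fun i => ∑ j', ‖(M ^ p) i j'‖₊) (Finset.mem_univ i)
    exact_mod_cast h4
  have hnorm : ‖M ^ p‖ ≤ (1 + ∑ q ∈ Finset.range N, ‖M ^ q‖ / (r:ℝ) ^ q) * (r:ℝ) ^ p := by
    rcases le_or_gt N p with hNp | hNp
    · calc ‖M ^ p‖ ≤ (r:ℝ) ^ p := hbig p hNp
        _ ≤ _ := by
          apply le_mul_of_one_le_left (by positivity)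
          have : (0:ℝ) ≤ ∑ q ∈ Finset.range N, ‖M ^ q‖ / (r:ℝ) ^ q :=
            Finset.sum_nonneg fun q _ => by positivity
          linarith
    · have hmem : ‖M ^ p‖ / (r:ℝ) ^ p ≤ ∑ q ∈ Finset.range N, ‖M ^ q‖ / (r:ℝ) ^ q :=
        Finset.single_le_sum (f := fun q => ‖M ^ q‖ / (r:ℝ) ^ q)
          (fun q _ => by positivity) (Finset.mem_range.mpr hNp)
      calc ‖M ^ p‖ = ‖M ^ p‖ / (r:ℝ) ^ p * (r:ℝ) ^ p := by
            field_simp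
        _ ≤ (∑ q ∈ Finset.range N, ‖M ^ q‖ / (r:ℝ) ^ q) * (r:ℝ) ^ p := by
            apply mul_le_mul_of_nonneg_right hmem (by positivity)
        _ ≤ _ := by
            apply mul_le_mul_of_nonneg_right _ (by positivity)
            linarith
  exact hentry.trans hnorm

/-- extend a K∞ function to an order isomorphism of ℝ -/
lemma aux_kinf_ext {a : ℝ → ℝ} (ha : IsKInfFun a) :
    ∃ e : ℝ ≃o ℝ, (∀ s, 0 ≤ s → e s = a s) ∧ e 0 = 0 := by
  obtain ⟨hcont, hmono, h0, htop⟩ := ha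
  set a' : ℝ → ℝ := fun s => a (max s 0) + min s 0 with ha'
  have ha'eq : ∀ s, 0 ≤ s → a' s = a s := by
    intro s hs
    simp [ha', max_eq_left hs, min_eq_right hs]
  have hC : Continuous a' := by
    apply Continuous.add
    · exact hcont.comp_continuous (continuous_id.max continuous_const)
        (fun x => Set.mem_Ici.mpr (le_max_right _ _))
    · exact continuous_id.min continuous_const
  have hSM : StrictMono a' := by
    intro s t hst
    have hmax : a (max s 0) ≤ a (max t 0) := by
      rcases le_total s 0 with h | h
      · rcases le_total t 0 with h2 | h2
        · simp [max_eq_right h, max_eq_right h2]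
        · apply (hmono.monotoneOn (Set.mem_Ici.mpr (le_max_right _ _))
            (Set.mem_Ici.mpr (le_max_right _ _)))
          exact max_le_max hst.le le_rfl
      · apply (hmono.monotoneOn (Set.mem_Ici.mpr (le_max_right _ _))
          (Set.mem_Ici.mpr (le_max_right _ _)))
        exact max_le_max hst.le le_rfl
    have hmin : min s 0 ≤ min t 0 := min_le_min hst.le le_rfl
    rcases lt_or_ge s 0 with h | h
    · have : min s 0 < min t 0 := by
        rcases le_total t 0 with h2 | h2
        · simpa [min_eq_left h.le, min_eq_left h2] using hst
        · simp [min_eq_left h.le, min_eq_right h2]; exact h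
      show a (max s 0) + min s 0 < a (max t 0) + min t 0
      linarith
    · have : a (max s 0) < a (max t 0) := by
        have hs0 : max s 0 = s := max_eq_left h
        have ht0 : max t 0 = t := max_eq_left (le_trans h hst.le)
        rw [hs0, ht0]
        exact hmono (Set.mem_Ici.mpr h) (Set.mem_Ici.mpr (h.trans hst.le)) hst
      show a (max s 0) + min s 0 < a (max t 0) + min t 0
      linarith
  have hsurj : Function.Surjective a' := by
    apply hC.surjective
    · apply Tendsto.congr' _ htop
      filter_upwards [eventually_ge_atTop (0:ℝ)] with s hs
      exact (ha'eq s hs).symm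
    · have : ∀ s : ℝ, s ≤ 0 → a' s = s := by
        intro s hs
        simp [ha', max_eq_right hs, min_eq_left hs, h0]
      apply Tendsto.congr' _ tendsto_id
      filter_upwards [eventually_le_atBot (0:ℝ)] with s hs
      exact (this s hs).symm
  refine ⟨StrictMono.orderIsoOfSurjective a' hSM hsurj, ?_, ?_⟩
  · intro s hs
    rw [StrictMono.coe_orderIsoOfSurjective]
    exact ha'eq s hs
  · show a' 0 = 0
    simp [ha', h0]

/-- Mollify a monotone function vanishing at `0⁺` into a continuous strictly monotone majorant. -/
lemma aux_mollify {g : ℝ → ℝ} (hmono : Monotone g) (hg0 : g 0 = 0) (hnn : ∀ s, 0 ≤ g s)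
    (hvan : ∀ ε : ℝ, 0 < ε → ∃ δ : ℝ, 0 < δ ∧ ∀ s, s ≤ δ → g s ≤ ε) :
    ∃ K : ℝ → ℝ, ContinuousOn K (Set.Ici 0) ∧ StrictMonoOn K (Set.Ici 0) ∧ K 0 = 0 ∧
      (∀ s, 0 ≤ s → g s ≤ K s) ∧ (∀ s, 0 ≤ s → 0 ≤ K s) := by
  have hint : ∀ a b : ℝ, IntervalIntegrable g MeasureTheory.volume a b :=
    fun a b => hmono.intervalIntegrable
  set J : ℝ → ℝ := fun s => ∫ v in (1:ℝ)..2, g (s * v) with hJ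
  have hintJ : ∀ s : ℝ, 0 ≤ s → IntervalIntegrable (fun v => g (s * v)) volume 1 2 := by
    intro s hs
    have : Monotone fun v => g (s * v) :=
      fun v w hvw => hmono (mul_le_mul_of_nonneg_left hvw hs)
    exact this.intervalIntegrable
  have hJge : ∀ s, 0 ≤ s → g s ≤ J s := by
    intro s hs
    have h1 : (∫ _ in (1:ℝ)..2, g s) ≤ J s := by
      apply intervalIntegral.integral_mono_on (by norm_num) intervalIntegrable_const
        (hintJ s hs)
      intro v hv
      exact hmono (le_mul_of_one_le_right hs hv.1)
    simp at h1
    linarith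
  have hJmono : ∀ s t, 0 ≤ s → s ≤ t → J s ≤ J t := by
    intro s t hs hst
    apply intervalIntegral.integral_mono_on (by norm_num) (hintJ s hs)
      (hintJ t (hs.trans hst))
    intro v hv
    exact hmono (mul_le_mul_of_nonneg_right hst (by linarith [hv.1]))
  have hJnn : ∀ s, 0 ≤ s → 0 ≤ J s := by
    intro s hs
    apply intervalIntegral.integral_nonneg (by norm_num)
    intro v _
    exact hnn _
  have hJle : ∀ s, 0 ≤ s → J s ≤ g (2 * s) := by
    intro s hs
    have h1 : J s ≤ ∫ _ in (1:ℝ)..2, g (2 * s) := by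
      apply intervalIntegral.integral_mono_on (by norm_num) (hintJ s hs)
        intervalIntegrable_const
      intro v hv
      apply hmono
      calc s * v ≤ s * 2 := mul_le_mul_of_nonneg_left hv.2 hs
        _ = 2 * s := by ring
    simp at h1
    linarith
  have hJ0 : J 0 = 0 := by
    have := hJle 0 le_rfl
    have h2 := hJnn 0 le_rfl
    simp only [mul_zero, hg0] at this
    linarith
  set K : ℝ → ℝ := fun s => s + J s with hK
  have hKmono : StrictMonoOn K (Set.Ici 0) := by
    intro s hs t ht hst
    have := hJmono s t hs hst.le
    show s + J s < t + J t
    linarith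
  set G : ℝ → ℝ := fun x => ∫ u in (0:ℝ)..x, g u with hG
  have hGcont : Continuous G := intervalIntegral.continuous_primitive hint 0
  have hJeq : ∀ s : ℝ, 0 < s → J s = s⁻¹ * (G (2 * s) - G s) := by
    intro s hs
    have h1 : (∫ v in (1:ℝ)..2, g (s * v)) = s⁻¹ • ∫ u in (s * 1)..(s * 2), g u :=
      intervalIntegral.integral_comp_mul_left g hs.ne'
    simp only [smul_eq_mul] at h1
    show (∫ v in (1:ℝ)..2, g (s * v)) = s⁻¹ * (G (2 * s) - G s)
    rw [h1]
    congr 1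
    have h2 : (∫ u in (s*1)..(s*2), g u) = G (s * 2) - G (s * 1) :=
      (intervalIntegral.integral_interval_sub_left (hint 0 (s*2)) (hint 0 (s*1))).symm
    rw [h2]
    norm_num
    rw [mul_comm]
  have hKcont : ContinuousOn K (Set.Ici 0) := by
    intro s hs
    rcases eq_or_lt_of_le (Set.mem_Ici.mp hs) with h0 | hpos
    · rw [ContinuousWithinAt, ← h0]
      have hK0 : K 0 = 0 := by simp [hK, hJ0]
      rw [hK0]
      rw [tendsto_order]
      constructor
      · intro b hb
        filter_upwards [self_mem_nhdsWithin] with u hu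
        have : (0:ℝ) ≤ K u := add_nonneg (Set.mem_Ici.mp hu) (hJnn u (Set.mem_Ici.mp hu))
        linarith
      · intro b hb
        obtain ⟨δ, hδ, hδ2⟩ := hvan (b/2) (by linarith)
        have hmem : Set.Iio (min (δ/2) (b/4)) ∈ nhdsWithin (0:ℝ) (Set.Ici 0) := by
          apply nhdsWithin_le_nhds
          exact Iio_mem_nhds (by positivity)
        filter_upwards [hmem, self_mem_nhdsWithin] with u hu1 hu2
        have hu0 : (0:ℝ) ≤ u := Set.mem_Ici.mp hu2
        have hub : u < b/4 := lt_of_lt_of_le hu1 (min_le_right _ _)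
        have hud : 2 * u ≤ δ := by
          have : u < δ/2 := lt_of_lt_of_le hu1 (min_le_left _ _)
          linarith
        have : J u ≤ g (2 * u) := hJle u hu0
        have : J u ≤ b/2 := this.trans (hδ2 _ hud)
        show u + J u < b
        linarith
    · apply ContinuousAt.continuousWithinAt
      have heq : ∀ᶠ u in nhds s, K u = u + u⁻¹ * (G (2 * u) - G u) := by
        filter_upwards [Ioi_mem_nhds hpos] with u hu
        rw [hK]
        simp only
        rw [hJeq u hu]
      apply ContinuousAt.congr _ (heq.mono fun u hu => hu.symm)
      apply ContinuousAt.add continuousAt_id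
      apply ContinuousAt.mul (continuousAt_inv₀ hpos.ne')
      exact ((hGcont.comp (continuous_const.mul continuous_id)).sub hGcont).continuousAt
  refine ⟨K, hKcont, hKmono, by simp [hK, hJ0], ?_, ?_⟩
  · intro s hs
    have := hJge s hs
    show g s ≤ s + J s
    linarith
  · intro s hs
    exact add_nonneg hs (hJnn s hs)

/-- iterates of a vanishing-at-0⁺ function vanish uniformly up to any order -/
lemma aux_iter_vanish {b : ℝ → ℝ}
    (hvan : ∀ ε : ℝ, 0 < ε → ∃ δ : ℝ, 0 < δ ∧ ∀ s, s ≤ δ → b s ≤ ε) :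
    ∀ N : ℕ, ∀ ε : ℝ, 0 < ε → ∃ δ : ℝ, 0 < δ ∧ ∀ s, s ≤ δ → ∀ t ≤ N, b^[t] s ≤ ε := by
  intro N
  induction N with
  | zero =>
    intro ε hε
    exact ⟨ε, hε, fun s hs t ht => by
      interval_cases t
      simpa using hs⟩
  | succ N ih =>
    intro ε hε
    obtain ⟨δ₁, hδ₁, h1⟩ := hvan ε hε
    obtain ⟨δ₂, hδ₂, h2⟩ := ih (min δ₁ ε) (lt_min hδ₁ hε)
    refine ⟨δ₂, hδ₂, fun s hs t ht => ?_⟩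
    rcases Nat.lt_or_ge t (N+1) with h | h
    · exact (h2 s hs t (Nat.lt_succ_iff.mp h)).trans (min_le_right _ _)
    · have ht' : t = N + 1 := le_antisymm ht h
      subst ht'
      rw [Function.iterate_succ_apply']
      exact h1 _ ((h2 s hs N le_rfl).trans (min_le_left _ _))

theorem stmt_7 {n l lV : ℕ}
    (S : Set (EuclideanSpace ℝ (Fin n))) (hSclosed : IsClosed S) (hSne : S.Nonempty)
    (xstar : EuclideanSpace ℝ (Fin n)) (hxstarS : xstar ∈ S)
    (D : Set (EuclideanSpace ℝ (Fin l))) (hDcomp : IsCompact D) (hDne : D.Nonempty)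
    (F : EuclideanSpace ℝ (Fin l) → EuclideanSpace ℝ (Fin n) → EuclideanSpace ℝ (Fin n))
    (hFS : ∀ d ∈ D, ∀ x ∈ S, F d x ∈ S)
    (hFeq : ∀ d ∈ D, F d xstar = xstar)
    (hFlocbdd : ∀ R : ℝ, ∃ C : ℝ, ∀ d ∈ D, ∀ x ∈ S, ‖x‖ ≤ R → ‖F d x‖ ≤ C)
    (hFcont : ∀ d ∈ D,
        ContinuousWithinAt (fun q : EuclideanSpace ℝ (Fin l) × EuclideanSpace ℝ (Fin n) =>
          F q.1 q.2) (D ×ˢ S) (d, xstar))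
    (A : Set (EuclideanSpace ℝ (Fin n))) (hAS : A ⊆ S)
    (m : ℕ)
    (htrap : ∀ (x : ℕ → EuclideanSpace ℝ (Fin n)) (d : ℕ → EuclideanSpace ℝ (Fin l)),
        x 0 ∈ S → (∀ t, d t ∈ D) → (∀ t, x (t + 1) = F (d t) (x t)) →
        ∀ t, m ≤ t → x t ∈ A)
    (V : Fin lV → EuclideanSpace ℝ (Fin n) → ℝ)
    (hVnonneg : ∀ i x, 0 ≤ V i x)
    (Γ : Matrix (Fin lV) (Fin lV) ℝ)
    (hΓ : ∀ i j, 0 ≤ Γ i j)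
    (hρ : ∀ μ : ℂ, ((Γ.map Complex.ofReal).charpoly).IsRoot μ → ‖μ‖ < 1)
    (a₁ a₂ : ℝ → ℝ) (ha₁ : IsKInfFun a₁) (ha₂ : IsKInfFun a₂)
    (ha12 : ∀ s, 0 ≤ s → a₁ s ≤ a₂ s)
    (hlow : ∀ x ∈ A, ∃ i, a₁ ‖x - xstar‖ ≤ V i x)
    (hup : ∀ x ∈ A, ∀ i, V i x ≤ a₂ ‖x - xstar‖)
    (hdec : ∀ d ∈ D, ∀ x ∈ A, ∀ i, V i (F d x) ≤ ∑ j, Γ i j * V j x) :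
    ∃ σKL : ℝ → ℝ → ℝ, IsKLFun σKL ∧
      ∀ (x : ℕ → EuclideanSpace ℝ (Fin n)) (d : ℕ → EuclideanSpace ℝ (Fin l)),
        x 0 ∈ S → (∀ t, d t ∈ D) → (∀ t, x (t + 1) = F (d t) (x t)) →
        ∀ t : ℕ, ‖x t - xstar‖ ≤ σKL ‖x 0 - xstar‖ t := by
  obtain ⟨d₀, hd₀⟩ := hDne
  -- matrix power bound
  obtain ⟨c, lam, hc, hlam0, hlam1, hMb⟩ := aux_matrix_pow_entry_bound (Γ.map Complex.ofReal) hρ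
  have hmap : ∀ p : ℕ, (Γ.map Complex.ofReal) ^ p = (Γ ^ p).map Complex.ofReal := by
    intro p
    have h1 := map_pow
      ((Complex.ofRealHom : ℝ →+* ℂ).mapMatrix :
        Matrix (Fin lV) (Fin lV) ℝ →+* Matrix (Fin lV) (Fin lV) ℂ) Γ p
    exact h1.symm
  have hΓpnn : ∀ p : ℕ, ∀ i j, 0 ≤ (Γ ^ p) i j := by
    intro p
    induction p with
    | zero =>
      intro i j
      by_cases hij : i = j <;> simp [hij, Matrix.one_apply]
    | succ p ih =>
      intro i j
      rw [pow_succ, Matrix.mul_apply]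
      exact Finset.sum_nonneg fun q _ => mul_nonneg (ih i q) (hΓ q j)
  have hΓpow : ∀ p : ℕ, ∀ i j, (Γ ^ p) i j ≤ c * lam ^ p := by
    intro p i j
    have h1 := hMb p i j
    rw [hmap p] at h1
    simp only [Matrix.map_apply, Complex.norm_real, Real.norm_eq_abs] at h1
    calc (Γ ^ p) i j ≤ |(Γ ^ p) i j| := le_abs_self _
      _ ≤ c * lam ^ p := h1
  -- uniform continuity at xstar
  have hUC : ∀ ε : ℝ, 0 < ε → ∃ δ : ℝ, 0 < δ ∧ ∀ d ∈ D, ∀ x ∈ S,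
      ‖x - xstar‖ ≤ δ → ‖F d x - xstar‖ ≤ ε := by
    intro ε hε
    have key : ∀ d ∈ D, ∃ U : Set (EuclideanSpace ℝ (Fin l)), ∃ δ : ℝ,
        IsOpen U ∧ d ∈ U ∧ 0 < δ ∧
        ∀ d' ∈ D, ∀ x ∈ S, d' ∈ U → ‖x - xstar‖ < δ → ‖F d' x - xstar‖ ≤ ε := by
      intro d hd
      have h1 := hFcont d hd
      rw [ContinuousWithinAt] at h1
      have h2 : Metric.closedBall xstar ε ∈ nhds
          ((fun q : EuclideanSpace ℝ (Fin l) × EuclideanSpace ℝ (Fin n) => F q.1 q.2)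
            (d, xstar)) := by
        simp only [hFeq d hd]
        exact Metric.closedBall_mem_nhds _ hε
      have h3 := h1 h2
      rw [mem_map, mem_nhdsWithin] at h3
      obtain ⟨O, hOopen, hOmem, hOsub⟩ := h3
      obtain ⟨U, Vs, hU, hV, hdU, hxV, hUV⟩ := (isOpen_prod_iff.mp hOopen) d xstar hOmem
      obtain ⟨δ, hδ, hball⟩ := Metric.isOpen_iff.mp hV xstar hxV
      refine ⟨U, δ, hU, hdU, hδ, fun d' hd' x hx hd'U hxδ => ?_⟩
      have hmem : (d', x) ∈ O ∩ (D ×ˢ S) := by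
        constructor
        · apply hUV
          constructor
          · exact hd'U
          · apply hball
            rw [Metric.mem_ball, dist_eq_norm]
            exact hxδ
        · exact ⟨hd', hx⟩
      have := hOsub hmem
      rw [Set.mem_preimage, Metric.mem_closedBall, dist_eq_norm] at this
      exact this
    choose! U δf hUopen hdU hδpos hprop using key
    obtain ⟨I, hIsub, hIfin, hIcover⟩ :=
      hDcomp.elim_finite_subcover_image (fun d hd => hUopen d hd)
        (fun d hd => Set.mem_biUnion hd (hdU d hd))
    have hIne : I.Nonempty := by
      by_contra hne
      rw [Set.not_nonempty_iff_eq_empty] at hne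
      have := hIcover hd₀
      simp [hne] at this
    haveI := hIfin.fintype
    set Ifin : Finset (EuclideanSpace ℝ (Fin l)) := hIfin.toFinset with hIfindef
    have hIfne : Ifin.Nonempty := by
      obtain ⟨d, hd⟩ := hIne
      exact ⟨d, hIfin.mem_toFinset.mpr hd⟩
    set δ := (Ifin.inf' hIfne δf) / 2 with hδdef
    have hδpos' : 0 < δ := by
      apply half_pos
      rw [Finset.lt_inf'_iff]
      intro d hd
      exact hδpos d (hIsub (hIfin.mem_toFinset.mp hd))
    refine ⟨δ, hδpos', fun d hd x hx hxδ => ?_⟩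
    have := hIcover hd
    rw [Set.mem_iUnion₂] at this
    obtain ⟨d', hd', hdU'⟩ := this
    apply hprop d' (hIsub hd') d hd x hx hdU'
    calc ‖x - xstar‖ ≤ δ := hxδ
      _ < Ifin.inf' hIfne δf := by
        rw [hδdef]
        have : 0 < Ifin.inf' hIfne δf := by
          rw [Finset.lt_inf'_iff]
          intro e he
          exact hδpos e (hIsub (hIfin.mem_toFinset.mp he))
        linarith
      _ ≤ δf d' := Finset.inf'_le _ (hIfin.mem_toFinset.mpr hd')
  -- the one-step bound function b
  set bset : ℝ → Set ℝ := fun s =>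
    (fun p : EuclideanSpace ℝ (Fin l) × EuclideanSpace ℝ (Fin n) => ‖F p.1 p.2 - xstar‖) ''
      {p | p.1 ∈ D ∧ p.2 ∈ S ∧ ‖p.2 - xstar‖ ≤ max s 0} with hbset
  set b : ℝ → ℝ := fun s => sSup (bset s) with hbdef
  have hbzeromem : ∀ s, (0:ℝ) ∈ bset s := by
    intro s
    refine ⟨(d₀, xstar), ⟨hd₀, hxstarS, by simp⟩, ?_⟩
    simp [hFeq d₀ hd₀]
  have hbbdd : ∀ s, BddAbove (bset s) := by
    intro s
    obtain ⟨C, hC⟩ := hFlocbdd (max s 0 + ‖xstar‖)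
    refine ⟨C + ‖xstar‖, fun y hy => ?_⟩
    obtain ⟨⟨d, x⟩, ⟨hdD, hxS, hxb⟩, rfl⟩ := hy
    have hxn : ‖x‖ ≤ max s 0 + ‖xstar‖ := by
      calc ‖x‖ = ‖x - xstar + xstar‖ := by rw [sub_add_cancel]
        _ ≤ ‖x - xstar‖ + ‖xstar‖ := norm_add_le _ _
        _ ≤ max s 0 + ‖xstar‖ := by linarith
    calc ‖F d x - xstar‖ ≤ ‖F d x‖ + ‖xstar‖ := norm_sub_le _ _
      _ ≤ C + ‖xstar‖ := by linarith [hC d hdD x hxS hxn]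
  have hbnn : ∀ s, 0 ≤ b s := fun s => le_csSup (hbbdd s) (hbzeromem s)
  have hbmono : Monotone b := by
    intro s t hst
    apply csSup_le_csSup (hbbdd t) ⟨0, hbzeromem s⟩
    rintro y ⟨⟨d, x⟩, ⟨hdD, hxS, hxb⟩, rfl⟩
    exact ⟨(d, x), ⟨hdD, hxS, hxb.trans (max_le_max hst le_rfl)⟩, rfl⟩
  have hb0 : b 0 = 0 := by
    apply le_antisymm _ (hbnn 0)
    apply csSup_le ⟨0, hbzeromem 0⟩
    rintro y ⟨⟨d, x⟩, ⟨hdD, hxS, hxb⟩, rfl⟩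
    have : x = xstar := by
      have : ‖x - xstar‖ ≤ 0 := by simpa using hxb
      have := le_antisymm this (norm_nonneg _)
      rwa [norm_eq_zero, sub_eq_zero] at this
    simp [this, hFeq d hdD]
  have hbstep : ∀ d ∈ D, ∀ x ∈ S, ∀ s : ℝ, ‖x - xstar‖ ≤ s → ‖F d x - xstar‖ ≤ b s := by
    intro d hd x hx s hs
    exact le_csSup (hbbdd s) ⟨(d, x), ⟨hd, hx, hs.trans (le_max_left _ _)⟩, rfl⟩
  have hbvan : ∀ ε : ℝ, 0 < ε → ∃ δ : ℝ, 0 < δ ∧ ∀ s, s ≤ δ → b s ≤ ε := by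
    intro ε hε
    obtain ⟨δ, hδ, hδ2⟩ := hUC ε hε
    refine ⟨δ, hδ, fun s hs => ?_⟩
    apply csSup_le ⟨0, hbzeromem s⟩
    rintro y ⟨⟨d, x⟩, ⟨hdD, hxS, hxb⟩, rfl⟩
    apply hδ2 d hdD x hxS
    calc ‖x - xstar‖ ≤ max s 0 := hxb
      _ ≤ δ := max_le (hs.trans le_rfl) hδ.le
  -- iterates of b all vanish; B0
  have hbiter0 : ∀ t : ℕ, b^[t] 0 = 0 := by
    intro t
    induction t with
    | zero => simp
    | succ t ih => rw [Function.iterate_succ_apply', ih, hb0]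
  set B0 : ℝ → ℝ := fun s => (Finset.range (m+1)).sup' (by simp) (fun t => b^[t] s) with hB0
  have hB0le : ∀ s : ℝ, ∀ t ≤ m, b^[t] s ≤ B0 s := by
    intro s t ht
    exact Finset.le_sup' (fun t => b^[t] s) (Finset.mem_range.mpr (Nat.lt_succ_of_le ht))
  have hB0mono : Monotone B0 := by
    intro s t hst
    apply Finset.sup'_le
    intro q hq
    exact le_trans (hbmono.iterate q hst) (Finset.le_sup' (fun p => b^[p] t) hq)
  have hB00 : B0 0 = 0 := by
    apply le_antisymm
    · apply Finset.sup'_le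
      intro q hq
      rw [hbiter0 q]
    · have := hB0le 0 0 (Nat.zero_le m)
      simpa using this
  have hB0van : ∀ ε : ℝ, 0 < ε → ∃ δ : ℝ, 0 < δ ∧ ∀ s, s ≤ δ → B0 s ≤ ε := by
    intro ε hε
    obtain ⟨δ, hδ, h2⟩ := aux_iter_vanish hbvan m ε hε
    refine ⟨δ, hδ, fun s hs => ?_⟩
    apply Finset.sup'_le
    intro q hq
    exact h2 s hs q (Nat.lt_succ_iff.mp (Finset.mem_range.mp hq))
  -- monotone extension of a₂
  obtain ⟨ha₂cont, ha₂mono, ha₂0, ha₂top⟩ := ha₂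
  set a₂m : ℝ → ℝ := fun u => a₂ (max u 0) with ha₂m
  have ha₂m_mono : Monotone a₂m := by
    intro u v huv
    exact ha₂mono.monotoneOn (Set.mem_Ici.mpr (le_max_right _ _))
      (Set.mem_Ici.mpr (le_max_right _ _)) (max_le_max huv le_rfl)
  have ha₂m_nn : ∀ u, 0 ≤ a₂m u := by
    intro u
    have : a₂ 0 ≤ a₂ (max u 0) := ha₂mono.monotoneOn (Set.mem_Ici.mpr le_rfl)
      (Set.mem_Ici.mpr (le_max_right _ _)) (le_max_right _ _)
    simpa [ha₂0] using this
  have ha₂m_eq : ∀ u : ℝ, 0 ≤ u → a₂m u = a₂ u := fun u hu => by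
    simp [ha₂m, max_eq_left hu]
  have ha₂m_van : ∀ ε : ℝ, 0 < ε → ∃ δ : ℝ, 0 < δ ∧ ∀ u, u ≤ δ → a₂m u ≤ ε := by
    intro ε hε
    have hc0 : ContinuousWithinAt a₂ (Set.Ici 0) 0 := ha₂cont 0 (Set.mem_Ici.mpr le_rfl)
    rw [ContinuousWithinAt, ha₂0, Metric.tendsto_nhdsWithin_nhds] at hc0
    obtain ⟨δ, hδ, h2⟩ := hc0 ε hε
    refine ⟨δ/2, by linarith, fun u hu => ?_⟩
    have h3 : max u 0 ∈ Set.Ici (0:ℝ) := Set.mem_Ici.mpr (le_max_right _ _)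
    have h4 : dist (max u 0) 0 < δ := by
      rw [Real.dist_eq, sub_zero, abs_of_nonneg (le_max_right _ _)]
      rcases le_total u 0 with h | h
      · rw [max_eq_right h]; linarith
      · rw [max_eq_left h]; linarith
    have := h2 h3 h4
    rw [Real.dist_eq] at this
    calc a₂m u = a₂ (max u 0) := rfl
      _ ≤ |a₂ (max u 0) - 0| := by rw [sub_zero]; exact le_abs_self _
      _ ≤ ε := this.le
  -- the gain function g
  set Cfac : ℝ := (c * lV + 1) / lam ^ m with hCfac
  have hCfacpos : 0 < Cfac := by
    apply div_pos _ (pow_pos hlam0 m)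
    have : (0:ℝ) ≤ c * lV := mul_nonneg hc (Nat.cast_nonneg lV)
    linarith
  set g : ℝ → ℝ := fun s => Cfac * a₂m (B0 s) with hgdef
  have hgmono : Monotone g := fun s t hst =>
    mul_le_mul_of_nonneg_left (ha₂m_mono (hB0mono hst)) hCfacpos.le
  have hg0 : g 0 = 0 := by
    simp [hgdef, hB00, ha₂m, ha₂0]
  have hgnn : ∀ s, 0 ≤ g s := fun s => mul_nonneg hCfacpos.le (ha₂m_nn _)
  have hgvan : ∀ ε : ℝ, 0 < ε → ∃ δ : ℝ, 0 < δ ∧ ∀ s, s ≤ δ → g s ≤ ε := by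
    intro ε hε
    obtain ⟨δ₂, hδ₂, h2⟩ := ha₂m_van (ε / Cfac) (div_pos hε hCfacpos)
    obtain ⟨δ, hδ, h1⟩ := hB0van δ₂ hδ₂
    refine ⟨δ, hδ, fun s hs => ?_⟩
    have := h2 (B0 s) (h1 s hs)
    calc g s = Cfac * a₂m (B0 s) := rfl
      _ ≤ Cfac * (ε / Cfac) := mul_le_mul_of_nonneg_left this hCfacpos.le
      _ = ε := by field_simp
  obtain ⟨K, hKcont, hKsm, hK0, hKge, hKnn⟩ := aux_mollify hgmono hg0 hgnn hgvan
  obtain ⟨e, he, he0⟩ := aux_kinf_ext ha₁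
  have hesymm0 : e.symm 0 = 0 := by
    have h := e.symm_apply_apply 0
    rw [he0] at h
    exact h
  -- the KL function
  refine ⟨fun s t => e.symm (K s * lam ^ t), ⟨?_, ?_⟩, ?_⟩
  · intro t ht
    refine ⟨?_, ?_, ?_, ?_⟩
    · apply Continuous.comp_continuousOn e.symm.continuous
      exact hKcont.mul continuousOn_const
    · intro s hs s' hs' hss
      apply e.symm.strictMono
      exact mul_lt_mul_of_pos_right (hKsm hs hs' hss) (Real.rpow_pos_of_pos hlam0 t)
    · show e.symm (K 0 * lam ^ t) = 0
      rw [hK0, zero_mul, hesymm0]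
    · intro s hs
      rw [← hesymm0]
      apply e.symm.monotone
      exact mul_nonneg (hKnn s hs) (Real.rpow_pos_of_pos hlam0 t).le
  · intro s hs
    constructor
    · intro t ht t' ht' htt
      apply e.symm.monotone
      apply mul_le_mul_of_nonneg_left _ (hKnn s hs)
      exact Real.rpow_le_rpow_of_exponent_ge hlam0 hlam1.le htt
    · have h1 : Tendsto (fun t : ℝ => K s * lam ^ t) atTop (nhds (K s * 0)) :=
        (tendsto_rpow_atTop_of_base_lt_one lam (by linarith) hlam1).const_mul (K s)
      rw [mul_zero] at h1
      have h2 := (e.symm.continuous.tendsto 0).comp h1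
      rwa [hesymm0] at h2
  -- the solution estimate
  intro x d hx0 hd hstep t
  set s0 : ℝ := ‖x 0 - xstar‖ with hs0def
  have hs0 : 0 ≤ s0 := norm_nonneg _
  have hxS : ∀ t, x t ∈ S := by
    intro t
    induction t with
    | zero => exact hx0
    | succ t ih => rw [hstep t]; exact hFS (d t) (hd t) (x t) ih
  have hiter : ∀ t, ‖x t - xstar‖ ≤ b^[t] s0 := by
    intro t
    induction t with
    | zero => simp [hs0def]
    | succ t ih =>
      rw [hstep t, Function.iterate_succ_apply']
      exact hbstep (d t) (hd t) (x t) (hxS t) _ ih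
  have hpre : ∀ t, t ≤ m → ‖x t - xstar‖ ≤ B0 s0 :=
    fun t ht => (hiter t).trans (hB0le s0 t ht)
  have hB0nn : 0 ≤ B0 s0 := le_trans (norm_nonneg _) (hpre 0 (Nat.zero_le m))
  have hxA : ∀ t, m ≤ t → x t ∈ A := htrap x d hx0 hd hstep
  have hVm : ∀ j, V j (x m) ≤ a₂m (B0 s0) := by
    intro j
    calc V j (x m) ≤ a₂ ‖x m - xstar‖ := hup (x m) (hxA m le_rfl) j
      _ ≤ a₂ (B0 s0) := ha₂mono.monotoneOn (Set.mem_Ici.mpr (norm_nonneg _))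
          (Set.mem_Ici.mpr hB0nn) (hpre m le_rfl)
      _ = a₂m (B0 s0) := (ha₂m_eq _ hB0nn).symm
  have hVbound : ∀ k : ℕ, ∀ i, V i (x (m + k)) ≤ ∑ j, (Γ ^ k) i j * V j (x m) := by
    intro k
    induction k with
    | zero =>
      intro i
      simp [Matrix.one_apply]
    | succ k ih =>
      intro i
      have hx1 : x (m + (k+1)) = F (d (m + k)) (x (m + k)) := hstep (m + k)
      rw [hx1]
      calc V i (F (d (m + k)) (x (m + k)))
          ≤ ∑ j, Γ i j * V j (x (m + k)) :=
            hdec (d (m+k)) (hd _) (x (m+k)) (hxA (m+k) (Nat.le_add_right m k)) i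
        _ ≤ ∑ j, Γ i j * (∑ j', (Γ ^ k) j j' * V j' (x m)) := by
            apply Finset.sum_le_sum
            intro j _
            exact mul_le_mul_of_nonneg_left (ih j) (hΓ i j)
        _ = ∑ j', (∑ j, Γ i j * (Γ ^ k) j j') * V j' (x m) := by
            simp_rw [Finset.mul_sum, Finset.sum_mul]
            rw [Finset.sum_comm]
            apply Finset.sum_congr rfl
            intro j' _
            apply Finset.sum_congr rfl
            intro j _
            ring
        _ = ∑ j', (Γ ^ (k+1)) i j' * V j' (x m) := by
            congr 1
            ext j'
            rw [pow_succ', Matrix.mul_apply]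
  -- the key decay estimate
  have hkey : a₁ ‖x t - xstar‖ ≤ g s0 * lam ^ t := by
    have ha₁mono := ha₁.2.1
    rcases le_total t m with htm | htm
    · have h1 : a₁ ‖x t - xstar‖ ≤ a₂m (B0 s0) := by
        calc a₁ ‖x t - xstar‖ ≤ a₁ (B0 s0) :=
            ha₁mono.monotoneOn (Set.mem_Ici.mpr (norm_nonneg _))
              (Set.mem_Ici.mpr hB0nn) (hpre t htm)
          _ ≤ a₂ (B0 s0) := ha12 _ hB0nn
          _ = a₂m (B0 s0) := (ha₂m_eq _ hB0nn).symm
      have h2 : 1 ≤ Cfac * lam ^ t := by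
        have hlm : lam ^ m ≤ lam ^ t := pow_le_pow_of_le_one hlam0.le hlam1.le htm
        have hlmpos : (0:ℝ) < lam ^ m := pow_pos hlam0 m
        have hcl : (0:ℝ) ≤ c * lV := mul_nonneg hc (Nat.cast_nonneg lV)
        rw [hCfac, div_mul_eq_mul_div, le_div_iff₀ hlmpos]
        calc (1:ℝ) * lam ^ m = lam ^ m := one_mul _
          _ ≤ lam ^ t := hlm
          _ ≤ (c * lV + 1) * lam ^ t := le_mul_of_one_le_left (pow_pos hlam0 t).le
              (by linarith)
      calc a₁ ‖x t - xstar‖ ≤ a₂m (B0 s0) := h1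
        _ ≤ (Cfac * lam ^ t) * a₂m (B0 s0) := le_mul_of_one_le_left (ha₂m_nn _) h2
        _ = g s0 * lam ^ t := by rw [hgdef]; ring
    · obtain ⟨k, rfl⟩ := Nat.exists_eq_add_of_le htm
      obtain ⟨i, hi⟩ := hlow (x (m + k)) (hxA (m+k) (Nat.le_add_right m k))
      have h1 : a₁ ‖x (m+k) - xstar‖ ≤ ∑ j, (Γ ^ k) i j * V j (x m) :=
        hi.trans (hVbound k i)
      have h2 : ∑ j, (Γ ^ k) i j * V j (x m) ≤ ∑ _j : Fin lV, (c * lam ^ k) * a₂m (B0 s0) := by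
        apply Finset.sum_le_sum
        intro j _
        apply mul_le_mul (hΓpow k i j) (hVm j) (hVnonneg j _)
        exact mul_nonneg hc (pow_pos hlam0 k).le
      have h3 : ∑ _j : Fin lV, (c * lam ^ k) * a₂m (B0 s0)
          = (lV : ℝ) * ((c * lam ^ k) * a₂m (B0 s0)) := by
        rw [Finset.sum_const, Finset.card_univ, Fintype.card_fin, nsmul_eq_mul]
      have h4 : (lV : ℝ) * ((c * lam ^ k) * a₂m (B0 s0)) ≤ g s0 * lam ^ (m + k) := by
        have hexp : lam ^ (m + k) = lam ^ m * lam ^ k := pow_add lam m k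
        rw [hgdef, hCfac, hexp]
        have hlmpos : (0:ℝ) < lam ^ m := pow_pos hlam0 m
        have h5 : (lV:ℝ) * c ≤ c * lV + 1 := by
          have : (0:ℝ) ≤ 1 := zero_le_one
          nlinarith [mul_nonneg hc (Nat.cast_nonneg lV)]
        have h6 : 0 ≤ lam ^ k * a₂m (B0 s0) := mul_nonneg (pow_pos hlam0 k).le (ha₂m_nn _)
        calc (lV : ℝ) * ((c * lam ^ k) * a₂m (B0 s0))
            = ((lV:ℝ) * c) * (lam ^ k * a₂m (B0 s0)) := by ring
          _ ≤ (c * lV + 1) * (lam ^ k * a₂m (B0 s0)) := mul_le_mul_of_nonneg_right h5 h6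
          _ = (c * lV + 1) / lam ^ m * a₂m (B0 s0) * (lam ^ m * lam ^ k) := by
              field_simp
      exact h1.trans (h2.trans (h3.trans_le h4))
  -- conclude
  have h1 : a₁ ‖x t - xstar‖ ≤ K s0 * lam ^ t :=
    hkey.trans (mul_le_mul_of_nonneg_right (hKge s0 hs0) (pow_pos hlam0 t).le)
  have h2 : e ‖x t - xstar‖ = a₁ ‖x t - xstar‖ := he _ (norm_nonneg _)
  calc ‖x t - xstar‖ = e.symm (e ‖x t - xstar‖) := (e.symm_apply_apply _).symm
    _ ≤ e.symm (K s0 * lam ^ (t:ℝ)) := by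
        apply e.symm.monotone
        rw [h2, Real.rpow_natCast]
        exact h1
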